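/- Let T be a non-singular automorphism of a probability space (Ω, ℱ, μ) and write w_{T^n} = d((T^{-n})_*μ)/dμ. If ∫_Ω √(w_{T^n}(ω)) μ(dω) → 0 as n → ∞, then for every f ∈ L²(μ), ⟨U_T^n f, f⟩_{L²(μ)} → 0 as n → ∞. -/

import Mathlib

/-- A standard Borel space equipped with a σ-finite-to-be measure and a
bi-measurable automorphism. -/
structure StdSystem : Type 1 where
  carrier : Type
  [meas : MeasurableSpace carrier]
  [borel : StandardBorelSpace carrier]
  μ : MeasureTheory.Measure carrier
  T : carrier ≃ᵐ carrier

attribute [instance] StdSystem.meas StdSystem.borel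

open MeasureTheory Filter Set
open scoped ENNReal

noncomputable section

noncomputable section

/-- The left shift on two-sided real sequences. -/
def shiftZ : (ℤ → ℝ) → (ℤ → ℝ) := fun x n => x (n + 1)

/-- `T` is a non-singular automorphism of `(Ω, μ)`: the pushforward of `μ` by `T` is
equivalent to `μ`. -/
def Nonsingular {Ω : Type*} [MeasurableSpace Ω] (T : Ω ≃ᵐ Ω) (μ : Measure Ω) : Prop :=
  Measure.map (⇑T) μ ≪ μ ∧ μ ≪ Measure.map (⇑T) μ

/-- `w_T = d((T⁻¹)_*μ)/dμ`, as a real-valued function. -/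
def wgt {Ω : Type*} [MeasurableSpace Ω] (T : Ω ≃ᵐ Ω) (μ : Measure Ω) : Ω → ℝ :=
  fun ω => ((Measure.map (⇑T.symm) μ).rnDeriv μ ω).toReal

/-- `w_{T^n} = d((T^{-n})_*μ)/dμ`, as a real-valued function. -/
def wgtn {Ω : Type*} [MeasurableSpace Ω] (T : Ω ≃ᵐ Ω) (μ : Measure Ω) (n : ℕ) : Ω → ℝ :=
  fun ω => ((Measure.map ((⇑T.symm)^[n]) μ).rnDeriv μ ω).toReal

/-- The measure `s^{-(1+α)} ds` on `(0,∞)`. -/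
def mIoi (α : ℝ) : Measure ℝ :=
  (volume.restrict (Set.Ioi (0:ℝ))).withDensity fun s => ENNReal.ofReal (s ^ (-(1+α)))

/-- The measure `|s|^{-(1+α)} ds` on `ℝ ∖ {0}`. -/
def mSym (α : ℝ) : Measure ℝ :=
  (volume.restrict ({(0:ℝ)}ᶜ)).withDensity fun s => ENNReal.ofReal (|s| ^ (-(1+α)))

/-- The multiplicative Maharam extension `T̃_α (ω, s) = (Tω, s ⬝ w_T(ω)^{1/α})`. -/
def Mah {Ω : Type*} [MeasurableSpace Ω] (α : ℝ) (T : Ω ≃ᵐ Ω) (μ : Measure Ω) :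
    Ω × ℝ → Ω × ℝ :=
  fun p => (T p.1, p.2 * (wgt T μ p.1) ^ (1/α))

/-- The additive Maharam extension `T̃ (ω, s) = (Tω, s − log w_T(ω))`. -/
def MahAdd {Ω : Type*} [MeasurableSpace Ω] (T : Ω ≃ᵐ Ω) (μ : Measure Ω) :
    Ω × ℝ → Ω × ℝ :=
  fun p => (T p.1, p.2 - Real.log (wgt T μ p.1))

/-- The measure `e^s ds` on `ℝ`. -/
def expMeasure : Measure ℝ := volume.withDensity fun s => ENNReal.ofReal (Real.exp s)

/-- An isomorphism of measure-preserving systems: a bi-measurable bijection `Φ` between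
invariant conull subsets carrying `μ` to `ν` and conjugating `T` to `R`. -/
def IsMPIso {X Y : Type*} [MeasurableSpace X] [MeasurableSpace Y]
    (μ : Measure X) (ν : Measure Y) (T : X → X) (R : Y → Y) (Φ : X → Y) : Prop :=
  Measurable Φ ∧ Measure.map Φ μ = ν ∧
  ∃ (A : Set X) (B : Set Y) (Ψ : Y → X),
    MeasurableSet A ∧ MeasurableSet B ∧ μ Aᶜ = 0 ∧ ν Bᶜ = 0 ∧
    T ⁻¹' A = A ∧ R ⁻¹' B = B ∧ Measurable Ψ ∧
    (∀ x ∈ A, Φ x ∈ B) ∧ (∀ y ∈ B, Ψ y ∈ A) ∧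
    (∀ x ∈ A, Ψ (Φ x) = x) ∧ (∀ y ∈ B, Φ (Ψ y) = y) ∧
    (∀ x ∈ A, Φ (T x) = R (Φ x))

/-- A bi-measurable bijection between conull subsets. -/
def AEBij {X Y : Type*} [MeasurableSpace X] [MeasurableSpace Y]
    (μ : Measure X) (ν : Measure Y) (Φ : X → Y) : Prop :=
  ∃ (A : Set X) (B : Set Y) (Ψ : Y → X),
    MeasurableSet A ∧ MeasurableSet B ∧ μ Aᶜ = 0 ∧ ν Bᶜ = 0 ∧ Measurable Ψ ∧
    (∀ x ∈ A, Φ x ∈ B) ∧ (∀ y ∈ B, Ψ y ∈ A) ∧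
    (∀ x ∈ A, Ψ (Φ x) = x) ∧ (∀ y ∈ B, Φ (Ψ y) = y)

/-- `Q` is the Lévy measure of a stationary `α`-stable process on `ℝ^ℤ`. -/
def IsStableLevy (α : ℝ) (Q : Measure (ℤ → ℝ)) : Prop :=
  Measure.map shiftZ Q = Q ∧ Q {x | x = fun _ => 0} = 0 ∧
  (∫⁻ x, ENNReal.ofReal (min ((x 0)^2) 1) ∂Q) < ⊤ ∧
  ∀ t : ℝ, 0 < t →
    Measure.map (fun x (n : ℤ) => t * x n) Q = ENNReal.ofReal (t ^ (-α)) • Q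

/-- The truncation function `c(x) = max(−1, min(x,1))`. -/
def cutoff (x : ℝ) : ℝ := max (-1) (min x 1)

/-- `P` is the law of the stationary infinitely divisible process with Lévy measure `Q`,
as given by the Lévy–Khinchine formula. -/
def IsLevyLaw (Q P : Measure (ℤ → ℝ)) : Prop :=
  IsProbabilityMeasure P ∧ Measure.map shiftZ P = P ∧
  ∀ (n₁ n₂ : ℤ), n₁ ≤ n₂ → ∀ a : ℤ → ℝ,
    Integrable (fun x : ℤ → ℝ =>
      Complex.exp (Complex.I * ((∑ k ∈ Finset.Icc n₁ n₂, a k * x k : ℝ) : ℂ)) - 1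
        - Complex.I * ((∑ k ∈ Finset.Icc n₁ n₂, a k * cutoff (x k) : ℝ) : ℂ)) Q ∧
    (∫ x, Complex.exp (Complex.I * ((∑ k ∈ Finset.Icc n₁ n₂, a k * x k : ℝ) : ℂ)) ∂P)
      = Complex.exp (∫ x,
          (Complex.exp (Complex.I * ((∑ k ∈ Finset.Icc n₁ n₂, a k * x k : ℝ) : ℂ)) - 1
            - Complex.I * ((∑ k ∈ Finset.Icc n₁ n₂, a k * cutoff (x k) : ℝ) : ℂ)) ∂Q)

section Aux

variable {Ω : Type*} [MeasurableSpace Ω]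

/-- Iterating an a.c. map preserves absolute continuity. -/
lemma map_iterate_ac (μ : Measure Ω) (e : Ω ≃ᵐ Ω)
    (h1 : Measure.map (⇑e) μ ≪ μ) (n : ℕ) : Measure.map ((⇑e)^[n]) μ ≪ μ := by
  induction n with
  | zero => simpa using Measure.AbsolutelyContinuous.rfl
  | succ n ih =>
    have heq : Measure.map ((⇑e)^[n+1]) μ = Measure.map (⇑e) (Measure.map ((⇑e)^[n]) μ) := by
      rw [Measure.map_map e.measurable (e.measurable.iterate n), Function.iterate_succ' (⇑e) n]
    rw [heq]
    exact (ih.map e.measurable).trans h1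

lemma map_symm_ac (μ : Measure Ω) (T : Ω ≃ᵐ Ω) (hT : Nonsingular T μ) :
    Measure.map (⇑T.symm) μ ≪ μ := by
  have := hT.2.map (f := ⇑T.symm) T.symm.measurable
  rwa [Measure.map_map T.symm.measurable T.measurable,
    show ⇑T.symm ∘ ⇑T = id from funext T.symm_apply_apply, Measure.map_id] at this

lemma wgtn_measurable (T : Ω ≃ᵐ Ω) (μ : Measure Ω) (n : ℕ) :
    Measurable (wgtn T μ n) :=
  (Measure.measurable_rnDeriv _ _).ennreal_toReal

lemma wgtn_nonneg (T : Ω ≃ᵐ Ω) (μ : Measure Ω) (n : ℕ) (ω : Ω) :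
    0 ≤ wgtn T μ n ω := ENNReal.toReal_nonneg

/-- The key "isometry" identity:
`∫⁻ w_{T^n} · (G ∘ T^n) dμ = ∫⁻ G dμ`. -/
lemma lintegral_wgtn_comp (μ : Measure Ω) [IsProbabilityMeasure μ] (T : Ω ≃ᵐ Ω)
    (hT : Nonsingular T μ) (n : ℕ) (G : Ω → ℝ≥0∞) (hG : Measurable G) :
    ∫⁻ ω, ENNReal.ofReal (wgtn T μ n ω) * G ((⇑T)^[n] ω) ∂μ = ∫⁻ ω, G ω ∂μ := by
  set ν : Measure Ω := Measure.map ((⇑T.symm)^[n]) μ with hν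
  have hac : ν ≪ μ := map_iterate_ac μ T.symm (map_symm_ac μ T hT) n
  haveI : IsProbabilityMeasure ν :=
    Measure.isProbabilityMeasure_map (T.symm.measurable.iterate n).aemeasurable
  have hwae : (fun ω => ENNReal.ofReal (wgtn T μ n ω)) =ᵐ[μ] ν.rnDeriv μ := by
    filter_upwards [Measure.rnDeriv_lt_top ν μ] with ω hω
    simp [wgtn, ← hν, ENNReal.ofReal_toReal hω.ne]
  have hGm : Measurable fun ω => G ((⇑T)^[n] ω) := hG.comp (T.measurable.iterate n)
  calc ∫⁻ ω, ENNReal.ofReal (wgtn T μ n ω) * G ((⇑T)^[n] ω) ∂μ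
      = ∫⁻ ω, ν.rnDeriv μ ω * G ((⇑T)^[n] ω) ∂μ := by
        refine lintegral_congr_ae ?_
        filter_upwards [hwae] with ω hω using by rw [hω]
    _ = ∫⁻ ω, G ((⇑T)^[n] ω) ∂ν := lintegral_rnDeriv_mul hac hGm.aemeasurable
    _ = ∫⁻ ω, G ((⇑T)^[n] ((⇑T.symm)^[n] ω)) ∂μ :=
        lintegral_map hGm (T.symm.measurable.iterate n)
    _ = ∫⁻ ω, G ω ∂μ := by
        refine lintegral_congr fun ω => ?_
        rw [(Function.LeftInverse.iterate T.apply_symm_apply n) ω]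

/-- Cauchy–Schwarz for `ℝ≥0∞`-valued lintegrals. -/
lemma lintegral_cs (μ : Measure Ω) (F G : Ω → ℝ≥0∞) (hF : Measurable F) (hG : Measurable G) :
    ∫⁻ ω, F ω * G ω ∂μ ≤
      (∫⁻ ω, F ω * F ω ∂μ) ^ (1/2 : ℝ) * (∫⁻ ω, G ω * G ω ∂μ) ^ (1/2 : ℝ) := by
  have hpq : Real.HolderConjugate 2 2 := Real.HolderConjugate.two_two
  have := ENNReal.lintegral_mul_le_Lp_mul_Lq μ hpq hF.aemeasurable hG.aemeasurable
  have h2 : ∀ x : ℝ≥0∞, x ^ (2:ℝ) = x * x := fun x => by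
    rw [show (2:ℝ) = ((2:ℕ):ℝ) by norm_num, ENNReal.rpow_natCast, sq]
  simpa only [Pi.mul_apply, h2] using this

lemma elp2 (μ : Measure Ω) (a : Ω → ℝ) :
    (∫⁻ ω, (‖a ω‖₊ : ℝ≥0∞) * ‖a ω‖₊ ∂μ) ^ (1/2 : ℝ) = eLpNorm a 2 μ := by
  rw [eLpNorm_eq_lintegral_rpow_enorm_toReal two_ne_zero ENNReal.ofNat_ne_top]
  congr 1
  · exact lintegral_congr fun ω => by
      rw [ENNReal.toReal_ofNat, show ((2:ℝ)) = ((2:ℕ):ℝ) by norm_num, ENNReal.rpow_natCast, sq, enorm_eq_nnnorm]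

/-- The core estimate, for a genuinely measurable `f`. -/
lemma core_tendsto {Ω : Type*} [MeasurableSpace Ω] (μ : Measure Ω) [IsProbabilityMeasure μ]
    (T : Ω ≃ᵐ Ω) (hT : Nonsingular T μ)
    (h : Tendsto (fun n : ℕ => ∫ ω, Real.sqrt (wgtn T μ n ω) ∂μ) atTop (nhds 0))
    (f : Ω → ℝ) (hfm : Measurable f) (hf : MemLp f 2 μ) :
    Tendsto (fun n : ℕ => ∫ ω, Real.sqrt (wgtn T μ n ω) * f ((⇑T)^[n] ω) * f ω ∂μ)
      atTop (nhds 0) := by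
  set u : ℕ → Ω → ℝ≥0∞ := fun n ω => ENNReal.ofReal (Real.sqrt (wgtn T μ n ω)) with hu
  have hum : ∀ n, Measurable (u n) := fun n =>
    ((wgtn_measurable T μ n).sqrt).ennreal_ofReal
  set W : ℕ → ℝ≥0∞ := fun n => ∫⁻ ω, u n ω ∂μ with hWdef
  have hw1 : ∀ n, ∫⁻ ω, ENNReal.ofReal (wgtn T μ n ω) ∂μ = 1 := by
    intro n
    have := lintegral_wgtn_comp μ T hT n (fun _ => 1) measurable_const
    simpa using this
  have hWle : ∀ n, W n ≤ 2 := by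
    intro n
    have hpt : ∀ ω, u n ω ≤ 1 + ENNReal.ofReal (wgtn T μ n ω) := by
      intro ω
      have hx : 0 ≤ wgtn T μ n ω := wgtn_nonneg T μ n ω
      have hsq : Real.sqrt (wgtn T μ n ω) ≤ 1 + wgtn T μ n ω := by
        nlinarith [Real.sq_sqrt hx, Real.sqrt_nonneg (wgtn T μ n ω)]
      calc u n ω ≤ ENNReal.ofReal (1 + wgtn T μ n ω) := ENNReal.ofReal_le_ofReal hsq
        _ = 1 + ENNReal.ofReal (wgtn T μ n ω) := by
            rw [ENNReal.ofReal_add zero_le_one hx, ENNReal.ofReal_one]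
    calc W n ≤ ∫⁻ ω, (1 + ENNReal.ofReal (wgtn T μ n ω)) ∂μ := lintegral_mono hpt
      _ = ∫⁻ (_ : Ω), (1:ℝ≥0∞) ∂μ + ∫⁻ ω, ENNReal.ofReal (wgtn T μ n ω) ∂μ :=
          lintegral_add_left measurable_const _
      _ = 1 + 1 := by rw [hw1 n, lintegral_one, measure_univ]
      _ = 2 := one_add_one_eq_two
  have hWfin : ∀ n, W n ≠ ⊤ := fun n => ((hWle n).trans_lt (by norm_num)).ne
  have hWtr : ∀ n, ∫ ω, Real.sqrt (wgtn T μ n ω) ∂μ = (W n).toReal := fun n =>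
    integral_eq_lintegral_of_nonneg_ae (ae_of_all _ fun ω => Real.sqrt_nonneg _)
      ((wgtn_measurable T μ n).sqrt).aestronglyMeasurable
  have hWt : Tendsto (fun n => (W n).toReal) atTop (nhds 0) := by
    have := h
    simp only [hWtr] at this
    exact this
  rw [NormedAddCommGroup.tendsto_nhds_zero]
  intro ε hε
  set B := eLpNorm f 2 μ with hBdef
  have hB : B ≠ ⊤ := hf.2.ne
  set D : ℝ≥0∞ := 2 * B + 3 with hDdef
  have hD0 : D ≠ 0 := by simp [hDdef]
  have hDt : D ≠ ⊤ := by
    simp [hDdef, ENNReal.add_ne_top, ENNReal.mul_ne_top, hB]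
  set η : ℝ≥0∞ := min 1 (ENNReal.ofReal (ε/3) / D) with hηdef
  have hη0 : η ≠ 0 := by
    have h1 : ENNReal.ofReal (ε/3) / D ≠ 0 :=
      ENNReal.div_ne_zero.mpr ⟨(ENNReal.ofReal_pos.mpr (by linarith)).ne', hDt⟩
    exact (lt_min one_pos h1.bot_lt).ne'
  have hη1 : η ≤ 1 := min_le_left _ _
  have hηt : η ≠ ⊤ := (hη1.trans_lt (by norm_num)).ne
  have hηD : D * η ≤ ENNReal.ofReal (ε/3) := by
    calc D * η ≤ D * (ENNReal.ofReal (ε/3) / D) := mul_le_mul_right (min_le_right _ _) D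
      _ = ENNReal.ofReal (ε/3) := ENNReal.mul_div_cancel hD0 hDt
  obtain ⟨g, hgε, hg2⟩ := hf.exists_simpleFunc_eLpNorm_sub_lt ENNReal.ofNat_ne_top hη0
  obtain ⟨C₀, hC₀⟩ := g.exists_forall_norm_le
  set C := max C₀ 0 with hCdef
  have hC : ∀ ω, ‖g ω‖ ≤ C := fun ω => (hC₀ ω).trans (le_max_left _ _)
  have hCnn : (0:ℝ) ≤ C := le_max_right _ _
  set φ : Ω → ℝ := f - ⇑g with hφdef
  have hφm : Measurable φ := hfm.sub g.measurable
  have hφε : eLpNorm φ 2 μ < η := hgε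
  -- nnnorm functions
  set gt : Ω → ℝ≥0∞ := fun ω => (‖g ω‖₊ : ℝ≥0∞) with hgt
  set pt : Ω → ℝ≥0∞ := fun ω => (‖φ ω‖₊ : ℝ≥0∞) with hpt
  set ft : Ω → ℝ≥0∞ := fun ω => (‖f ω‖₊ : ℝ≥0∞) with hft
  have hgtm : Measurable gt := g.measurable.enorm
  have hptm : Measurable pt := hφm.enorm
  set Ng : ℝ≥0∞ := ∫⁻ ω, gt ω * gt ω ∂μ with hNgdef
  set Np : ℝ≥0∞ := ∫⁻ ω, pt ω * pt ω ∂μ with hNpdef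
  have hNg12 : Ng ^ (1/2 : ℝ) = eLpNorm (⇑g) 2 μ := elp2 μ g
  have hNp12 : Np ^ (1/2 : ℝ) ≤ η := by
    rw [hNpdef, elp2 μ φ]
    exact hφε.le
  have hNgB : Ng ^ (1/2 : ℝ) ≤ B + 1 := by
    rw [hNg12]
    have hgeq : ⇑g = f - φ := by
      funext ω; simp [hφdef]
    rw [hgeq]
    calc eLpNorm (f - φ) 2 μ ≤ eLpNorm f 2 μ + eLpNorm φ 2 μ :=
          eLpNorm_sub_le hfm.aestronglyMeasurable hφm.aestronglyMeasurable one_le_two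
      _ ≤ B + η := add_le_add_right hφε.le _
      _ ≤ B + 1 := add_le_add_right hη1 _
  -- pointwise structure of the integrand
  have hL : ∀ n : ℕ, ‖∫ ω, Real.sqrt (wgtn T μ n ω) * f ((⇑T)^[n] ω) * f ω ∂μ‖ ≤
      (∫⁻ ω, u n ω * ft ((⇑T)^[n] ω) * ft ω ∂μ).toReal := by
    intro n
    refine (norm_integral_le_lintegral_norm _).trans (le_of_eq ?_)
    congr 1
    refine lintegral_congr fun ω => ?_
    rw [ofReal_norm, enorm_eq_nnnorm]
    push_cast [nnnorm_mul]
    congr 1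
    · congr 1
      rw [hu]
      rw [← enorm_eq_nnnorm, ← ofReal_norm, Real.norm_eq_abs,
        abs_of_nonneg (Real.sqrt_nonneg _)]
  -- the main per-n bound
  set K : ℝ≥0∞ := ENNReal.ofReal C * ENNReal.ofReal C with hKdef
  have hKt : K ≠ ⊤ := ENNReal.mul_ne_top ENNReal.ofReal_ne_top ENNReal.ofReal_ne_top
  have hbound : ∀ n : ℕ, (∫⁻ ω, u n ω * ft ((⇑T)^[n] ω) * ft ω ∂μ) ≤
      K * W n + ENNReal.ofReal (ε/3) := by
    intro n
    have hTn : Measurable ((⇑T)^[n]) := T.measurable.iterate n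
    have huu : ∀ ω, u n ω * u n ω = ENNReal.ofReal (wgtn T μ n ω) := by
      intro ω
      rw [hu, ← ENNReal.ofReal_mul (Real.sqrt_nonneg _),
        Real.mul_self_sqrt (wgtn_nonneg T μ n ω)]
    -- pointwise expansion bound
    have hptw : ∀ ω, u n ω * ft ((⇑T)^[n] ω) * ft ω ≤
        u n ω * gt ((⇑T)^[n] ω) * gt ω + u n ω * gt ((⇑T)^[n] ω) * pt ω +
        u n ω * pt ((⇑T)^[n] ω) * gt ω + u n ω * pt ((⇑T)^[n] ω) * pt ω := by
      intro ω
      have hfle : ∀ x, ft x ≤ gt x + pt x := by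
        intro x
        have hx : f x = g x + φ x := by simp [hφdef]
        simp only [hft, hgt, hpt, hx]
        exact_mod_cast nnnorm_add_le (g x) (φ x)
      calc u n ω * ft ((⇑T)^[n] ω) * ft ω
          ≤ u n ω * (gt ((⇑T)^[n] ω) + pt ((⇑T)^[n] ω)) * (gt ω + pt ω) :=
            mul_le_mul' (mul_le_mul' le_rfl (hfle _)) (hfle _)
        _ = u n ω * gt ((⇑T)^[n] ω) * gt ω + u n ω * gt ((⇑T)^[n] ω) * pt ω +
            u n ω * pt ((⇑T)^[n] ω) * gt ω + u n ω * pt ((⇑T)^[n] ω) * pt ω := by ring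
    have hm1 : Measurable fun ω => u n ω * gt ((⇑T)^[n] ω) * gt ω :=
      (((hum n).mul (hgtm.comp hTn)).mul hgtm)
    have hm2 : Measurable fun ω => u n ω * gt ((⇑T)^[n] ω) * pt ω :=
      (((hum n).mul (hgtm.comp hTn)).mul hptm)
    have hm3 : Measurable fun ω => u n ω * pt ((⇑T)^[n] ω) * gt ω :=
      (((hum n).mul (hptm.comp hTn)).mul hgtm)
    -- the cross-term L² identities
    have hiso_g : ∫⁻ ω, (u n ω * gt ((⇑T)^[n] ω)) * (u n ω * gt ((⇑T)^[n] ω)) ∂μ = Ng := by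
      have : ∀ ω, (u n ω * gt ((⇑T)^[n] ω)) * (u n ω * gt ((⇑T)^[n] ω)) =
          ENNReal.ofReal (wgtn T μ n ω) * ((fun x => gt x * gt x) ((⇑T)^[n] ω)) := by
        intro ω
        rw [← huu ω]; ring
      rw [lintegral_congr this]
      exact lintegral_wgtn_comp μ T hT n _ (hgtm.mul hgtm)
    have hiso_p : ∫⁻ ω, (u n ω * pt ((⇑T)^[n] ω)) * (u n ω * pt ((⇑T)^[n] ω)) ∂μ = Np := by
      have : ∀ ω, (u n ω * pt ((⇑T)^[n] ω)) * (u n ω * pt ((⇑T)^[n] ω)) =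
          ENNReal.ofReal (wgtn T μ n ω) * ((fun x => pt x * pt x) ((⇑T)^[n] ω)) := by
        intro ω
        rw [← huu ω]; ring
      rw [lintegral_congr this]
      exact lintegral_wgtn_comp μ T hT n _ (hptm.mul hptm)
    have hT1 : ∫⁻ ω, u n ω * gt ((⇑T)^[n] ω) * gt ω ∂μ ≤ K * W n := by
      have hptw1 : ∀ ω, u n ω * gt ((⇑T)^[n] ω) * gt ω ≤ K * u n ω := by
        intro ω
        have hgle : ∀ x, gt x ≤ ENNReal.ofReal C := by
          intro x
          simp only [hgt]
          rw [← enorm_eq_nnnorm, ← ofReal_norm]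
          exact ENNReal.ofReal_le_ofReal (hC x)
        calc u n ω * gt ((⇑T)^[n] ω) * gt ω
            ≤ u n ω * ENNReal.ofReal C * ENNReal.ofReal C :=
              mul_le_mul' (mul_le_mul' le_rfl (hgle _)) (hgle _)
          _ = K * u n ω := by rw [hKdef]; ring
      calc ∫⁻ ω, u n ω * gt ((⇑T)^[n] ω) * gt ω ∂μ ≤ ∫⁻ ω, K * u n ω ∂μ :=
            lintegral_mono hptw1
        _ = K * W n := lintegral_const_mul K (hum n)
    have hT2 : ∫⁻ ω, u n ω * gt ((⇑T)^[n] ω) * pt ω ∂μ ≤ (B + 1) * η := by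
      have := lintegral_cs μ (fun ω => u n ω * gt ((⇑T)^[n] ω)) pt
        ((hum n).mul (hgtm.comp hTn)) hptm
      rw [hiso_g] at this
      calc ∫⁻ ω, u n ω * gt ((⇑T)^[n] ω) * pt ω ∂μ
          ≤ Ng ^ (1/2:ℝ) * Np ^ (1/2:ℝ) := this
        _ ≤ (B + 1) * η := mul_le_mul' hNgB hNp12
    have hT3 : ∫⁻ ω, u n ω * pt ((⇑T)^[n] ω) * gt ω ∂μ ≤ (B + 1) * η := by
      have := lintegral_cs μ (fun ω => u n ω * pt ((⇑T)^[n] ω)) gt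
        ((hum n).mul (hptm.comp hTn)) hgtm
      rw [hiso_p] at this
      calc ∫⁻ ω, u n ω * pt ((⇑T)^[n] ω) * gt ω ∂μ
          ≤ Np ^ (1/2:ℝ) * Ng ^ (1/2:ℝ) := this
        _ ≤ η * (B + 1) := mul_le_mul' hNp12 hNgB
        _ = (B + 1) * η := mul_comm _ _
    have hT4 : ∫⁻ ω, u n ω * pt ((⇑T)^[n] ω) * pt ω ∂μ ≤ η := by
      have := lintegral_cs μ (fun ω => u n ω * pt ((⇑T)^[n] ω)) pt
        ((hum n).mul (hptm.comp hTn)) hptm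
      rw [hiso_p] at this
      calc ∫⁻ ω, u n ω * pt ((⇑T)^[n] ω) * pt ω ∂μ
          ≤ Np ^ (1/2:ℝ) * Np ^ (1/2:ℝ) := this
        _ ≤ η * η := mul_le_mul' hNp12 hNp12
        _ ≤ 1 * η := mul_le_mul' hη1 le_rfl
        _ = η := one_mul η
    calc ∫⁻ ω, u n ω * ft ((⇑T)^[n] ω) * ft ω ∂μ
        ≤ ∫⁻ ω, (u n ω * gt ((⇑T)^[n] ω) * gt ω + u n ω * gt ((⇑T)^[n] ω) * pt ω +
            u n ω * pt ((⇑T)^[n] ω) * gt ω + u n ω * pt ((⇑T)^[n] ω) * pt ω) ∂μ :=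
          lintegral_mono hptw
      _ = ∫⁻ ω, u n ω * gt ((⇑T)^[n] ω) * gt ω ∂μ +
          ∫⁻ ω, u n ω * gt ((⇑T)^[n] ω) * pt ω ∂μ +
          ∫⁻ ω, u n ω * pt ((⇑T)^[n] ω) * gt ω ∂μ +
          ∫⁻ ω, u n ω * pt ((⇑T)^[n] ω) * pt ω ∂μ := by
          rw [lintegral_add_left (f := fun ω => u n ω * gt ((⇑T)^[n] ω) * gt ω + u n ω * gt ((⇑T)^[n] ω) * pt ω + u n ω * pt ((⇑T)^[n] ω) * gt ω) ((hm1.add hm2).add hm3),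
            lintegral_add_left (f := fun ω => u n ω * gt ((⇑T)^[n] ω) * gt ω + u n ω * gt ((⇑T)^[n] ω) * pt ω) (hm1.add hm2), lintegral_add_left hm1]
      _ ≤ K * W n + ((B + 1) * η + (B + 1) * η + η) := by
          calc _ ≤ K * W n + (B + 1) * η + (B + 1) * η + η :=
                add_le_add (add_le_add (add_le_add hT1 hT2) hT3) hT4
            _ = K * W n + ((B + 1) * η + (B + 1) * η + η) := by ring
      _ ≤ K * W n + ENNReal.ofReal (ε/3) := by
          refine add_le_add_right ?_ _
          calc (B + 1) * η + (B + 1) * η + η = D * η := by rw [hDdef]; ring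
            _ ≤ ENNReal.ofReal (ε/3) := hηD
  -- conclude via squeeze
  have hev : ∀ᶠ n in atTop, K.toReal * (W n).toReal < ε/3 := by
    have h0 : Tendsto (fun n => K.toReal * (W n).toReal) atTop (nhds 0) := by
      simpa using hWt.const_mul K.toReal
    exact h0.eventually (gt_mem_nhds (by linarith))
  filter_upwards [hev] with n hn
  have h1 := (hL n).trans (ENNReal.toReal_mono
    (by
      refine ENNReal.add_ne_top.mpr ⟨?_, ENNReal.ofReal_ne_top⟩
      exact ENNReal.mul_ne_top hKt (hWfin n)) (hbound n))
  rw [ENNReal.toReal_add (ENNReal.mul_ne_top hKt (hWfin n)) ENNReal.ofReal_ne_top,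
    ENNReal.toReal_mul, ENNReal.toReal_ofReal (by linarith)] at h1
  calc ‖∫ ω, Real.sqrt (wgtn T μ n ω) * f ((⇑T)^[n] ω) * f ω ∂μ‖
      ≤ K.toReal * (W n).toReal + ε/3 := h1
    _ < ε/3 + ε/3 := by linarith
    _ < ε := by linarith

end Aux

/-- if `∫ √(w_{T^n}) dμ → 0` then `⟨U_T^n f, f⟩ → 0` for every `f ∈ L²(μ)`. -/
theorem sqrt_weight_decay_implies_zero_type
    {Ω : Type*} [MeasurableSpace Ω] (μ : Measure Ω) [IsProbabilityMeasure μ]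
    (T : Ω ≃ᵐ Ω) (hT : Nonsingular T μ)
    (h : Tendsto (fun n : ℕ => ∫ ω, Real.sqrt (wgtn T μ n ω) ∂μ) atTop (nhds 0)) :
    ∀ f : Ω → ℝ, MemLp f 2 μ →
      Tendsto (fun n : ℕ => ∫ ω, Real.sqrt (wgtn T μ n ω) * f ((⇑T)^[n] ω) * f ω ∂μ)
        atTop (nhds 0) := by
  intro f hf
  have hsm := hf.aestronglyMeasurable
  set f' := hsm.mk f with hf'def
  have hmeas : StronglyMeasurable f' := hsm.stronglyMeasurable_mk
  have hae : f =ᵐ[μ] f' := hsm.ae_eq_mk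
  have hf'2 : MemLp f' 2 μ := hf.ae_eq hae
  have hcore := core_tendsto μ T hT h f' hmeas.measurable hf'2
  refine hcore.congr fun n => ?_
  refine integral_congr_ae ?_
  have hmap : Measure.map ((⇑T)^[n]) μ ≪ μ := map_iterate_ac μ T hT.1 n
  have hfn : (fun ω => f' ((⇑T)^[n] ω)) =ᵐ[μ] fun ω => f ((⇑T)^[n] ω) :=
    ae_of_ae_map (T.measurable.iterate n).aemeasurable (hmap.ae_le hae.symm)
  filter_upwards [hae, hfn] with ω h1 h2
  rw [h1, h2]
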